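/- Every vertex x of the fractional stable-set polytope FSTAB(G) = { x ∈ R_+^{V} : x_v + x_w ≤ 1 for all edges (v,w) } satisfies x_v ∈ {0, 1/2, 1} for every vertex v of G. -/

import Mathlib

set_option maxHeartbeats 1000000


/-- The fractional stable-set polytope of a graph: nonnegative real vectors indexed by the
vertices with `x v + x w ≤ 1` on every edge. -/
def FSTAB {V : Type*} (G : SimpleGraph V) : Set (V → ℝ) :=
  {x | (∀ v, 0 ≤ x v) ∧ ∀ v w, G.Adj v w → x v + x w ≤ 1}

/-- Balinski–Nemhauser–Trotter: every extreme point of `FSTAB(G)` is half-integral, i.e.,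
takes values in `{0, 1/2, 1}` at every vertex. -/
theorem fstab_extremePoint_half_integral
    {V : Type*} [Fintype V] (G : SimpleGraph V) (x : V → ℝ)
    (hx : x ∈ Set.extremePoints ℝ (FSTAB G)) :
    ∀ v, x v = 0 ∨ x v = 1/2 ∨ x v = 1 := by
  classical
  by_contra h
  push_neg at h
  obtain ⟨v0, hv0⟩ := h
  obtain ⟨⟨hpos, hedge⟩, hext⟩ := hx
  set Bad : V → Prop := fun v => ¬ (x v = 0 ∨ x v = 1/2 ∨ x v = 1) with hBad
  set d : V → ℝ := fun v => if Bad v then (if x v < 1/2 then -1 else 1) else 0 with hd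
  set f : V → ℝ := fun v => if Bad v then min (x v) (min |x v - 1/2| |x v - 1|) else 1 with hf
  have hne : (Finset.univ : Finset V).Nonempty := ⟨v0, Finset.mem_univ _⟩
  set ε : ℝ := min (1/2) (Finset.univ.inf' hne f) with hεdef
  have hfpos : ∀ v, 0 < f v := by
    intro v
    simp only [hf]
    split_ifs with hb
    · simp only [hBad, not_or] at hb
      obtain ⟨h0, h1, h2⟩ := hb
      refine lt_min (lt_of_le_of_ne (hpos v) (Ne.symm h0)) (lt_min ?_ ?_)
      · exact abs_pos.mpr (sub_ne_zero.mpr h1)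
      · exact abs_pos.mpr (sub_ne_zero.mpr h2)
    · norm_num
  have hεpos : 0 < ε :=
    lt_min (by norm_num) ((Finset.lt_inf'_iff hne).mpr fun v _ => hfpos v)
  have hεhalf : ε ≤ 1/2 := min_le_left _ _
  have hεf : ∀ v, Bad v → ε ≤ x v ∧ ε ≤ |x v - 1/2| ∧ ε ≤ |x v - 1| := by
    intro v hb
    have h1 : ε ≤ f v :=
      le_trans (min_le_right _ _) (Finset.inf'_le f (Finset.mem_univ v))
    rw [hf] at h1
    simp only [if_pos hb] at h1
    exact ⟨le_trans h1 (min_le_left _ _),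
      le_trans h1 (le_trans (min_le_right _ _) (min_le_left _ _)),
      le_trans h1 (le_trans (min_le_right _ _) (min_le_right _ _))⟩
  -- values of good vertices that are ≤ some 1 - a with a > 0... we just use membership facts
  have hdcases : ∀ v, d v = 0 ∨ d v = 1 ∨ d v = -1 := by
    intro v
    simp only [hd]
    split_ifs <;> simp
  -- bounds needed in the edge analysis
  have keyA : ∀ v, Bad v → x v < 1/2 → ε ≤ 1/2 - x v := by
    intro v hb hlt
    have := (hεf v hb).2.1
    rwa [abs_of_neg (by linarith : x v - 1/2 < 0), neg_sub] at this
  have keyB : ∀ v, Bad v → ¬ x v < 1/2 → x v ≤ 1 → ε ≤ 1 - x v := by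
    intro v hb hge hle
    have h1 : x v ≠ 1 := by intro hc; exact hb (Or.inr (Or.inr hc))
    have := (hεf v hb).2.2
    rwa [abs_of_neg (by
      cases lt_or_eq_of_le hle with
      | inl h => linarith
      | inr h => exact absurd h h1), neg_sub] at this
  have keyhalf : ∀ v, Bad v → ¬ x v < 1/2 → 1/2 < x v := by
    intro v hb hge
    have h1 : x v ≠ 1/2 := by intro hc; exact hb (Or.inr (Or.inl hc))
    exact lt_of_le_of_ne (not_lt.mp hge) (Ne.symm h1)
  -- good vertices on an edge with small value are 0 or 1/2
  have goodval : ∀ v, ¬ Bad v → x v < 1 → x v = 0 ∨ x v = 1/2 := by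
    intro v hb hlt
    simp only [hBad] at hb
    rcases not_not.mp hb with h | h | h
    · exact Or.inl h
    · exact Or.inr h
    · exact absurd h (by linarith)
  -- edge bound, uniform in the sign s = ±1
  have hedge' : ∀ (s : ℝ), s = 1 ∨ s = -1 → ∀ v w, G.Adj v w →
      (x v + s * (ε * d v)) + (x w + s * (ε * d w)) ≤ 1 := by
    intro s hs v w hvw
    have hsum := hedge v w hvw
    have hv0 := hpos v
    have hw0 := hpos w
    have hvle : x v ≤ 1 := by linarith
    have hwle : x w ≤ 1 := by linarith
    by_cases hbv : Bad v <;> by_cases hbw : Bad w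
    · -- both bad
      by_cases h1 : x v < 1/2 <;> by_cases h2 : x w < 1/2
      · -- both small : d = -1, -1
        have hA := keyA v hbv h1
        have hB := keyA w hbw h2
        simp only [hd, if_pos hbv, if_pos hbw, if_pos h1, if_pos h2]
        rcases hs with rfl | rfl <;> linarith
      · -- v small, w large
        have h2' := keyhalf w hbw h2
        simp only [hd, if_pos hbv, if_pos hbw, if_pos h1, if_neg h2]
        rcases hs with rfl | rfl <;> linarith
      · have h1' := keyhalf v hbv h1
        simp only [hd, if_pos hbv, if_pos hbw, if_neg h1, if_pos h2]
        rcases hs with rfl | rfl <;> linarith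
      · -- both large : impossible
        have h1' := keyhalf v hbv h1
        have h2' := keyhalf w hbw h2
        linarith
    · -- v bad, w good
      have hdw : d w = 0 := by simp only [hd, if_neg hbw]
      by_cases h1 : x v < 1/2
      · -- need x w ≤ 1/2 + ... d v = -1
        have hA := keyA v hbv h1
        have hwlt : x w < 1 := by
          have hv0' : 0 < x v := lt_of_le_of_ne hv0 (by
            intro hc; exact hbv (Or.inl hc.symm))
          linarith
        rcases goodval w hbw hwlt with hw | hw
        · simp only [hd, if_pos hbv, if_pos h1, if_neg hbw]
          rcases hs with rfl | rfl <;> linarith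
        · simp only [hd, if_pos hbv, if_pos h1, if_neg hbw]
          rcases hs with rfl | rfl <;> linarith
      · -- d v = 1 : then x w = 0
        have h1' := keyhalf v hbv h1
        have hB := keyB v hbv h1 hvle
        have hwlt : x w < 1/2 := by linarith
        rcases goodval w hbw (by linarith) with hw | hw
        · simp only [hd, if_pos hbv, if_neg h1, if_neg hbw]
          rcases hs with rfl | rfl <;> linarith
        · linarith
    · -- v good, w bad : symmetric
      have hdv : d v = 0 := by simp only [hd, if_neg hbv]
      by_cases h2 : x w < 1/2
      · have hA := keyA w hbw h2
        have hvlt : x v < 1 := by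
          have hw0' : 0 < x w := lt_of_le_of_ne hw0 (by
            intro hc; exact hbw (Or.inl hc.symm))
          linarith
        rcases goodval v hbv hvlt with hv | hv
        · simp only [hd, if_pos hbw, if_pos h2, if_neg hbv]
          rcases hs with rfl | rfl <;> linarith
        · simp only [hd, if_pos hbw, if_pos h2, if_neg hbv]
          rcases hs with rfl | rfl <;> linarith
      · have h2' := keyhalf w hbw h2
        have hB := keyB w hbw h2 hwle
        have hvlt : x v < 1/2 := by linarith
        rcases goodval v hbv (by linarith) with hv | hv
        · simp only [hd, if_pos hbw, if_neg h2, if_neg hbv]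
          rcases hs with rfl | rfl <;> linarith
        · linarith
    · simp only [hd, if_neg hbv, if_neg hbw]
      rcases hs with rfl | rfl <;> linarith
  -- nonnegativity, uniform in sign
  have hnn : ∀ (s : ℝ), s = 1 ∨ s = -1 → ∀ v, 0 ≤ x v + s * (ε * d v) := by
    intro s hs v
    by_cases hbv : Bad v
    · have hεx := (hεf v hbv).1
      simp only [hd, if_pos hbv]
      split_ifs with h1 <;> rcases hs with rfl | rfl <;> linarith [hpos v]
    · simp only [hd, if_neg hbv]
      rcases hs with rfl | rfl <;> simpa using hpos v
  set y : V → ℝ := fun v => x v + ε * d v with hy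
  set z : V → ℝ := fun v => x v - ε * d v with hz
  have hymem : y ∈ FSTAB G := by
    constructor
    · intro v; simpa using hnn 1 (Or.inl rfl) v
    · intro v w hvw; simpa using hedge' 1 (Or.inl rfl) v w hvw
  have hzmem : z ∈ FSTAB G := by
    constructor
    · intro v
      have := hnn (-1) (Or.inr rfl) v
      simp only [hz]; linarith
    · intro v w hvw
      have := hedge' (-1) (Or.inr rfl) v w hvw
      simp only [hz]; linarith
  have hbadv0 : Bad v0 := by
    simp only [hBad]
    rintro (h | h | h)
    exacts [hv0.1 h, hv0.2.1 h, hv0.2.2 h]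
  have hdv0 : d v0 ≠ 0 := by
    simp only [hd, if_pos hbadv0]
    split_ifs <;> norm_num
  have hyz : y ≠ z := by
    intro hc
    have := congrFun hc v0
    simp only [hy, hz] at this
    have : ε * d v0 = 0 := by linarith
    rcases mul_eq_zero.mp this with h | h
    · exact absurd h (ne_of_gt hεpos)
    · exact hdv0 h
  have hseg : x ∈ openSegment ℝ y z := by
    refine ⟨1/2, 1/2, by norm_num, by norm_num, by norm_num, ?_⟩
    funext v
    simp only [hy, hz, Pi.add_apply, Pi.smul_apply, smul_eq_mul]
    ring
  have hy' := hext hymem hzmem hseg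
  apply hyz
  have : ε * d v0 = 0 := by
    have := congrFun hy' v0
    simp only [hy] at this
    linarith
  exact absurd ((mul_eq_zero.mp this).resolve_left (ne_of_gt hεpos)) hdv0
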